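/- Consider the linear system in nonnegative variables R_c1, R_c2, R_p1, R_p2 with constraints R_c2 ≤ A₁, R_p1 ≤ A₂, R_c1 + R_c2 + R_p1 ≤ A₃, R_c1 ≤ B₁, R_p2 ≤ B₂, R_c1 + R_c2 + R_p2 ≤ B₃, for nonnegative constants A₁, A₂, A₃, B₁, B₂, B₃. Then the projection onto (R₁, R₂) = (R_c1 + R_p1, R_c2 + R_p2) contains exactly those nonnegative pairs satisfying: R₁ ≤ A₃, R₁ ≤ B₁ + A₂, R₂ ≤ B₃, R₂ ≤ A₁ + B₂, R₁ + R₂ ≤ A₂ + B₃, and R₁ + R₂ ≤ B₂ + A₃. -/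
import Mathlib


/-- Fourier–Motzkin elimination: the projection of the six-constraint region in
nonnegative `(R_c1, R_c2, R_p1, R_p2)` onto `(R₁, R₂) = (R_c1 + R_p1, R_c2 + R_p2)`
is exactly the set of nonnegative pairs satisfying the six stated inequalities. -/
theorem fourier_motzkin_projection (A1 A2 A3 B1 B2 B3 : ℝ)
    (hA1 : 0 ≤ A1) (hA2 : 0 ≤ A2) (hA3 : 0 ≤ A3)
    (hB1 : 0 ≤ B1) (hB2 : 0 ≤ B2) (hB3 : 0 ≤ B3) :
    {p : ℝ × ℝ | ∃ Rc1 Rc2 Rp1 Rp2 : ℝ,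
        0 ≤ Rc1 ∧ 0 ≤ Rc2 ∧ 0 ≤ Rp1 ∧ 0 ≤ Rp2 ∧
        Rc2 ≤ A1 ∧ Rp1 ≤ A2 ∧ Rc1 + Rc2 + Rp1 ≤ A3 ∧
        Rc1 ≤ B1 ∧ Rp2 ≤ B2 ∧ Rc1 + Rc2 + Rp2 ≤ B3 ∧
        p.1 = Rc1 + Rp1 ∧ p.2 = Rc2 + Rp2}
      = {p : ℝ × ℝ | 0 ≤ p.1 ∧ 0 ≤ p.2 ∧
          p.1 ≤ A3 ∧ p.1 ≤ B1 + A2 ∧ p.2 ≤ B3 ∧ p.2 ≤ A1 + B2 ∧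
          p.1 + p.2 ≤ A2 + B3 ∧ p.1 + p.2 ≤ B2 + A3} := by
  ext p
  simp only [Set.mem_setOf_eq]
  constructor
  · rintro ⟨a, b, c, d, ha, hb, hc, hd, h1, h2, h3, h4, h5, h6, e1, e2⟩
    refine ⟨?_, ?_, ?_, ?_, ?_, ?_, ?_, ?_⟩ <;> linarith
  · rintro ⟨h1, h2, h3, h4, h5, h6, h7, h8⟩
    refine ⟨p.1 - min p.1 A2, p.2 - min p.2 B2, min p.1 A2, min p.2 B2, ?_, ?_, ?_, ?_, ?_, ?_, ?_, ?_, ?_, ?_, ?_, ?_⟩ <;>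
      rcases min_cases p.1 A2 with ⟨e, le⟩ | ⟨e, le⟩ <;>
      rcases min_cases p.2 B2 with ⟨f, lf⟩ | ⟨f, lf⟩ <;> linarith
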